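/- arXiv:math/0504460 — 2 statements merged into one kernel-verified Lean document; each statement's English description precedes it below -/
import Mathlib

section
/- Let μ^1, μ^2 be partitions, let q ∈ ℂ with |q| > 1, and let a ∈ ℂ. Define f_μ(q) = Σ_{x∈μ} q^{c(x)} (a finite sum over the cells of μ) and f_{μ^1 μ^2}(q) = Σ_{i,j≥1} (q^{μ^1_i + μ^2_j − i − j + 1} − q^{−i−j+1}), an absolutely convergent double series. Then the series Σ_{i≥1} (q^{μ^1_i − i} − a q^{−i}) and Σ_{j≥1} (q^{μ^2_j − j} − a q^{−j}) converge absolutely and q · [ (Σ_{i≥1} (q^{μ^1_i − i} − a q^{−i})) · (Σ_{j≥1} (q^{μ^2_j − j} − a q^{−j})) − (1 − a)² / (q − 1)² ] = f_{μ^1 μ^2}(q) − a f_{μ^1}(q) − a f_{μ^2}(q). -/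
/-- A partition `μ = (μ_1 ≥ μ_2 ≥ …)`: a weakly decreasing, eventually zero sequence of
naturals.  We index parts from `0`, so `part i` is the part `μ_{i+1}` of the paper. -/
structure Partition' where
  part : ℕ → ℕ
  antitone' : ∀ ⦃i j : ℕ⦄, i ≤ j → part j ≤ part i
  eventually_zero : ∃ N, ∀ n, N ≤ n → part n = 0

namespace Partition'

/-- The Young diagram of `μ`, as a set of (0-indexed) cells `(i, j)`, `j < μ_{i+1}`. -/
def cellsSet (μ : Partition') : Set (ℕ × ℕ) := {x | x.2 < μ.part x.1}

lemma cellsSet_finite (μ : Partition') : μ.cellsSet.Finite := by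
  obtain ⟨N, hN⟩ := μ.eventually_zero
  have hsub : μ.cellsSet ⊆ Set.Iio N ×ˢ Set.Iio (μ.part 0) := by
    rintro ⟨i, j⟩ hx
    have hj : j < μ.part i := hx
    refine Set.mem_prod.mpr ⟨?_, ?_⟩
    · by_contra h
      simp only [Set.mem_Iio, not_lt] at h
      rw [hN i h] at hj
      omega
    · exact Set.mem_Iio.mpr (lt_of_lt_of_le hj (μ.antitone' (Nat.zero_le i)))
  exact ((Set.finite_Iio N).prod (Set.finite_Iio (μ.part 0))).subset hsub

/-- The cells of the Young diagram of `μ`, as a finite set. -/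
noncomputable def cells (μ : Partition') : Finset (ℕ × ℕ) := μ.cellsSet_finite.toFinset

/-- `|μ|`, the size (number of cells, i.e. sum of the parts) of `μ`. -/
noncomputable def size (μ : Partition') : ℕ := μ.cells.card

lemma row_finite (μ : Partition') (j : ℕ) : {i : ℕ | j < μ.part i}.Finite := by
  obtain ⟨N, hN⟩ := μ.eventually_zero
  apply (Set.finite_Iio N).subset
  intro i hi
  simp only [Set.mem_setOf_eq] at hi
  simp only [Set.mem_Iio]
  by_contra h
  push_neg at h
  rw [hN i h] at hi
  omega

/-- The conjugate (transposed) partition `μ^t`: `(μ^t)_{j+1} = #{i : μ_{i+1} > j}`. -/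
noncomputable def conj (μ : Partition') : Partition' where
  part j := Nat.card {i : ℕ | j < μ.part i}
  antitone' := by
    intro j k hjk
    exact Nat.card_mono (μ.row_finite j) (fun i hi => lt_of_le_of_lt hjk hi)
  eventually_zero := by
    refine ⟨μ.part 0, fun j hj => ?_⟩
    have h : {i : ℕ | j < μ.part i} = (∅ : Set ℕ) := by
      ext i
      simp only [Set.mem_setOf_eq, Set.mem_empty_iff_false, iff_false, not_lt]
      exact le_trans (μ.antitone' (Nat.zero_le i)) hj
    show Nat.card {i : ℕ | j < μ.part i} = 0
    rw [h]
    simp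

/-- The content `c(x) = j - i` of a (0-indexed) cell `x = (i,j)`. -/
def content (x : ℕ × ℕ) : ℤ := (x.2 : ℤ) - (x.1 : ℤ)

/-- The hook length `h(x) = μ_i + (μ^t)_j - i - j + 1` (1-indexed) of a cell of `μ`,
as an integer. -/
noncomputable def hook (μ : Partition') (x : ℕ × ℕ) : ℤ :=
  (μ.part x.1 : ℤ) + (μ.conj.part x.2 : ℤ) - (x.1 : ℤ) - (x.2 : ℤ) - 1

/-- `n(μ) = Σ_i (i-1) μ_i` (1-indexed), i.e. `Σ_i i * μ_{i+1}` (0-indexed). -/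
noncomputable def nstat (μ : Partition') : ℕ := ∑ᶠ i : ℕ, i * μ.part i

/-- The empty partition. -/
def empty : Partition' := ⟨fun _ => 0, fun _ _ _ => le_rfl, ⟨0, fun _ _ => rfl⟩⟩

/-- The number of (nonzero) parts of `μ`. -/
noncomputable def length (μ : Partition') : ℕ := μ.conj.part 0

end Partition'


section Aux

open Finset

variable {q : ℂ}

private lemma aux_hq0 (hq : 1 < ‖q‖) : q ≠ 0 := by
  intro h; rw [h, norm_zero] at hq; linarith

private lemma aux_hq1 (hq : 1 < ‖q‖) : q ≠ 1 := by
  intro h; rw [h, norm_one] at hq; linarith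

private lemma aux_geo_norm (hq : 1 < ‖q‖) :
    Summable (fun j : ℕ => ‖q ^ (-(j : ℤ))‖) := by
  have h : ‖q⁻¹‖ < 1 := by rw [norm_inv]; exact inv_lt_one_of_one_lt₀ hq
  refine (summable_geometric_of_lt_one (norm_nonneg q⁻¹) h).congr fun j => ?_
  rw [zpow_neg, ← inv_zpow, zpow_natCast, norm_pow]

private lemma aux_geo_norm1 (hq : 1 < ‖q‖) :
    Summable (fun j : ℕ => ‖q ^ (-(j : ℤ) - 1)‖) := by
  have hq0 := aux_hq0 hq
  refine ((aux_geo_norm hq).mul_right ‖q⁻¹‖).congr fun j => ?_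
  rw [← norm_mul, ← zpow_neg_one q, ← zpow_add₀ hq0, sub_eq_add_neg]

private lemma aux_geo_tsum (hq : 1 < ‖q‖) :
    ∑' j : ℕ, q ^ (-(j : ℤ)) = q / (q - 1) := by
  have hq0 := aux_hq0 hq
  have hq1 : q - 1 ≠ 0 := sub_ne_zero.mpr (aux_hq1 hq)
  have h : ‖q⁻¹‖ < 1 := by rw [norm_inv]; exact inv_lt_one_of_one_lt₀ hq
  calc ∑' j : ℕ, q ^ (-(j : ℤ)) = ∑' j : ℕ, (q⁻¹) ^ j := by
        refine tsum_congr fun j => ?_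
        rw [zpow_neg, ← inv_zpow, zpow_natCast]
    _ = (1 - q⁻¹)⁻¹ := tsum_geometric_of_norm_lt_one h
    _ = q / (q - 1) := by
        rw [inv_eq_iff_eq_inv, eq_comm, inv_div]
        field_simp

private lemma aux_geo_tsum1 (hq : 1 < ‖q‖) :
    ∑' j : ℕ, q ^ (-(j : ℤ) - 1) = 1 / (q - 1) := by
  have hq0 := aux_hq0 hq
  have hq1 : q - 1 ≠ 0 := sub_ne_zero.mpr (aux_hq1 hq)
  calc ∑' j : ℕ, q ^ (-(j : ℤ) - 1) = ∑' j : ℕ, q ^ (-(j : ℤ)) * q⁻¹ := by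
        refine tsum_congr fun j => ?_
        rw [← zpow_neg_one q, ← zpow_add₀ hq0, sub_eq_add_neg]
    _ = (q / (q - 1)) * q⁻¹ := by rw [tsum_mul_right, aux_geo_tsum hq]
    _ = 1 / (q - 1) := by field_simp

private lemma aux_content (μ : Partition') (hq : 1 < ‖q‖) {N : ℕ}
    (hN : ∀ n, N ≤ n → μ.part n = 0) :
    (q - 1) * ∑ x ∈ μ.cells, q ^ Partition'.content x
      = q * ∑ i ∈ Finset.range N, (q ^ ((μ.part i : ℤ) - i - 1) - q ^ (-(i : ℤ) - 1)) := by
  have hq0 := aux_hq0 hq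
  have hq1 := aux_hq1 hq
  have hq1' : q - 1 ≠ 0 := sub_ne_zero.mpr hq1
  have hstep : ∑ x ∈ μ.cells, q ^ Partition'.content x
      = ∑ i ∈ Finset.range N, ∑ j ∈ Finset.range (μ.part i), q ^ ((j : ℤ) - (i : ℤ)) := by
    rw [Finset.sum_sigma']
    refine Finset.sum_nbij' (fun x => (⟨x.1, x.2⟩ : Σ _ : ℕ, ℕ)) (fun x => (x.1, x.2))
      ?_ ?_ ?_ ?_ ?_
    · rintro ⟨i, j⟩ hx
      have hj : j < μ.part i := by
        simpa [Partition'.cells, Partition'.cellsSet] using hx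
      simp only [Finset.mem_sigma, Finset.mem_range]
      refine ⟨?_, hj⟩
      by_contra h
      push_neg at h
      rw [hN i h] at hj; omega
    · rintro ⟨i, j⟩ hx
      simp only [Finset.mem_sigma, Finset.mem_range] at hx
      simpa [Partition'.cells, Partition'.cellsSet] using hx.2
    · rintro ⟨i, j⟩ _; rfl
    · rintro ⟨i, j⟩ _; rfl
    · rintro ⟨i, j⟩ _; rfl
  have key : ∀ i : ℕ, (q - 1) * ∑ j ∈ Finset.range (μ.part i), q ^ ((j : ℤ) - (i : ℤ))
      = q * (q ^ ((μ.part i : ℤ) - i - 1) - q ^ (-(i : ℤ) - 1)) := by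
    intro i
    have h1 : ∀ j : ℕ, q ^ ((j : ℤ) - (i : ℤ)) = q ^ j * q ^ (-(i : ℤ)) := fun j => by
      rw [sub_eq_add_neg, zpow_add₀ hq0, zpow_natCast]
    rw [Finset.sum_congr rfl fun j _ => h1 j, ← Finset.sum_mul, geom_sum_eq hq1]
    have hx : q ^ ((i : ℤ)) ≠ 0 := zpow_ne_zero _ hq0
    have hclear : (q - 1) * ((q ^ μ.part i - 1) / (q - 1) * q ^ (-(i : ℤ)))
        = (q ^ μ.part i - 1) * q ^ (-(i : ℤ)) := by
      field_simp
    rw [hclear]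
    simp only [sub_eq_add_neg, zpow_add₀ hq0, zpow_neg, zpow_one, zpow_natCast]
    field_simp
  rw [hstep, Finset.mul_sum, Finset.mul_sum]
  exact Finset.sum_congr rfl fun i _ => key i

end Aux

/-- Equation (56): with `a = e^{−t}`, `F_{μ¹μ²}(q, a) = f_{μ¹μ²}(q) − a f_{μ¹}(q) − a f_{μ²}(q)`,
where `f_μ(q) = Σ_{x∈μ} q^{c(x)}` and `f_{μ¹μ²}(q) = Σ_{i,j≥1} (q^{μ¹_i+μ²_j−i−j+1} − q^{−i−j+1})`. -/
theorem F_eq_f_sums (μ1 μ2 : Partition') (q a : ℂ) (hq : 1 < ‖q‖) :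
    Summable (fun p : ℕ × ℕ =>
      ‖q ^ ((μ1.part p.1 : ℤ) + (μ2.part p.2 : ℤ) - (p.1 : ℤ) - (p.2 : ℤ) - 1) -
        q ^ (-(p.1 : ℤ) - (p.2 : ℤ) - 1)‖) ∧
    Summable (fun i : ℕ => ‖q ^ ((μ1.part i : ℤ) - (i : ℤ) - 1) - a * q ^ (-(i : ℤ) - 1)‖) ∧
    Summable (fun j : ℕ => ‖q ^ ((μ2.part j : ℤ) - (j : ℤ) - 1) - a * q ^ (-(j : ℤ) - 1)‖) ∧
    q * ((∑' i : ℕ, (q ^ ((μ1.part i : ℤ) - (i : ℤ) - 1) - a * q ^ (-(i : ℤ) - 1))) *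
          (∑' j : ℕ, (q ^ ((μ2.part j : ℤ) - (j : ℤ) - 1) - a * q ^ (-(j : ℤ) - 1))) -
        (1 - a) ^ 2 / (q - 1) ^ 2) =
      (∑' p : ℕ × ℕ,
          (q ^ ((μ1.part p.1 : ℤ) + (μ2.part p.2 : ℤ) - (p.1 : ℤ) - (p.2 : ℤ) - 1) -
            q ^ (-(p.1 : ℤ) - (p.2 : ℤ) - 1))) -
        a * (∑ x ∈ μ1.cells, q ^ Partition'.content x) -
        a * (∑ x ∈ μ2.cells, q ^ Partition'.content x) := by
  classical
  have hq0 : q ≠ 0 := aux_hq0 hq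
  have hq1 : q ≠ 1 := aux_hq1 hq
  have hq1' : q - 1 ≠ 0 := sub_ne_zero.mpr hq1
  obtain ⟨N1, hN1⟩ := μ1.eventually_zero
  obtain ⟨N2, hN2⟩ := μ2.eventually_zero
  set g1 : ℕ → ℂ := fun i => q ^ ((μ1.part i : ℤ) - i - 1) - q ^ (-(i : ℤ) - 1) with hg1
  set g2 : ℕ → ℂ := fun j => q ^ ((μ2.part j : ℤ) - j - 1) - q ^ (-(j : ℤ) - 1) with hg2
  have hg1z : ∀ i, i ∉ Finset.range N1 → g1 i = 0 := by
    intro i hi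
    rw [Finset.mem_range, not_lt] at hi
    simp [hg1, hN1 i hi]
  have hg2z : ∀ j, j ∉ Finset.range N2 → g2 j = 0 := by
    intro j hj
    rw [Finset.mem_range, not_lt] at hj
    simp [hg2, hN2 j hj]
  have hs1 : Summable g1 := summable_of_ne_finset_zero hg1z
  have hs2 : Summable g2 := summable_of_ne_finset_zero hg2z
  have hs1n : Summable (fun i => ‖g1 i‖) :=
    summable_of_ne_finset_zero (s := Finset.range N1) fun i hi => by rw [hg1z i hi, norm_zero]
  have hs2n : Summable (fun j => ‖g2 j‖) :=
    summable_of_ne_finset_zero (s := Finset.range N2) fun j hj => by rw [hg2z j hj, norm_zero]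
  set T1 : ℂ := ∑ i ∈ Finset.range N1, g1 i with hT1d
  set T2 : ℂ := ∑ j ∈ Finset.range N2, g2 j with hT2d
  have hT1 : ∑' i, g1 i = T1 := tsum_eq_sum hg1z
  have hT2 : ∑' j, g2 j = T2 := tsum_eq_sum hg2z
  have hgeoN : Summable (fun j : ℕ => ‖q ^ (-(j : ℤ) - 1)‖) := aux_geo_norm1 hq
  have hgeo : Summable (fun j : ℕ => q ^ (-(j : ℤ) - 1)) := hgeoN.of_norm
  have hgeo0N : Summable (fun j : ℕ => ‖q ^ (-(j : ℤ))‖) := aux_geo_norm hq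
  have htgeo : ∑' j : ℕ, q ^ (-(j : ℤ) - 1) = 1 / (q - 1) := aux_geo_tsum1 hq
  have htgeo0 : ∑' j : ℕ, q ^ (-(j : ℤ)) = q / (q - 1) := aux_geo_tsum hq
  -- single sums
  have hpt1 : ∀ i : ℕ, q ^ ((μ1.part i : ℤ) - (i : ℤ) - 1) - a * q ^ (-(i : ℤ) - 1)
      = g1 i + (1 - a) * q ^ (-(i : ℤ) - 1) := fun i => by simp only [hg1]; ring
  have hpt2 : ∀ j : ℕ, q ^ ((μ2.part j : ℤ) - (j : ℤ) - 1) - a * q ^ (-(j : ℤ) - 1)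
      = g2 j + (1 - a) * q ^ (-(j : ℤ) - 1) := fun j => by simp only [hg2]; ring
  have hgeoaN : Summable (fun i : ℕ => ‖(1 - a) * q ^ (-(i : ℤ) - 1)‖) :=
    (hgeoN.mul_left (‖1 - a‖)).congr fun i => (norm_mul _ _).symm
  have hsum1 : Summable (fun i : ℕ =>
      ‖q ^ ((μ1.part i : ℤ) - (i : ℤ) - 1) - a * q ^ (-(i : ℤ) - 1)‖) := by
    refine Summable.of_nonneg_of_le (fun i => norm_nonneg _) (fun i => ?_) (hs1n.add hgeoaN)
    rw [hpt1 i]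
    exact norm_add_le _ _
  have hsum2 : Summable (fun j : ℕ =>
      ‖q ^ ((μ2.part j : ℤ) - (j : ℤ) - 1) - a * q ^ (-(j : ℤ) - 1)‖) := by
    refine Summable.of_nonneg_of_le (fun j => norm_nonneg _) (fun j => ?_) (hs2n.add hgeoaN)
    rw [hpt2 j]
    exact norm_add_le _ _
  have hS1 : (∑' i : ℕ, (q ^ ((μ1.part i : ℤ) - (i : ℤ) - 1) - a * q ^ (-(i : ℤ) - 1)))
      = T1 + (1 - a) * (1 / (q - 1)) := by
    rw [tsum_congr hpt1, Summable.tsum_add hs1 (hgeo.mul_left (1 - a)), hT1, tsum_mul_left, htgeo]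
  have hS2 : (∑' j : ℕ, (q ^ ((μ2.part j : ℤ) - (j : ℤ) - 1) - a * q ^ (-(j : ℤ) - 1)))
      = T2 + (1 - a) * (1 / (q - 1)) := by
    rw [tsum_congr hpt2, Summable.tsum_add hs2 (hgeo.mul_left (1 - a)), hT2, tsum_mul_left, htgeo]
  -- the double sum
  have hpt : ∀ p : ℕ × ℕ,
      q ^ ((μ1.part p.1 : ℤ) + (μ2.part p.2 : ℤ) - (p.1 : ℤ) - (p.2 : ℤ) - 1) -
        q ^ (-(p.1 : ℤ) - (p.2 : ℤ) - 1)
      = q * g1 p.1 * g2 p.2 + g1 p.1 * q ^ (-(p.2 : ℤ)) + q ^ (-(p.1 : ℤ)) * g2 p.2 := by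
    rintro ⟨i, j⟩
    have E : ∀ m n : ℤ, q ^ (m + n) = q ^ m * q ^ n := fun m n => zpow_add₀ hq0 m n
    have e1 : q ^ ((μ1.part i : ℤ) + (μ2.part j : ℤ) - i - j - 1)
        = q ^ (1 : ℤ) * q ^ ((μ1.part i : ℤ) - i - 1) * q ^ ((μ2.part j : ℤ) - j - 1) := by
      rw [← E, ← E]; congr 1; ring
    have e2 : q ^ (-(i : ℤ) - j - 1)
        = q ^ (1 : ℤ) * q ^ (-(i : ℤ) - 1) * q ^ (-(j : ℤ) - 1) := by
      rw [← E, ← E]; congr 1; ring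
    have e3 : q ^ (-(j : ℤ)) = q ^ (1 : ℤ) * q ^ (-(j : ℤ) - 1) := by
      rw [← E]; congr 1; ring
    have e4 : q ^ (-(i : ℤ)) = q ^ (1 : ℤ) * q ^ (-(i : ℤ) - 1) := by
      rw [← E]; congr 1; ring
    simp only [hg1, hg2]
    rw [e1, e2, e3, e4, zpow_one]
    ring
  have hqg1n : Summable (fun i : ℕ => ‖q * g1 i‖) :=
    (hs1n.mul_left (‖q‖)).congr fun i => (norm_mul _ _).symm
  have P1 : Summable (fun p : ℕ × ℕ => ‖q * g1 p.1 * g2 p.2‖) :=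
    Summable.mul_norm (f := fun i => q * g1 i) (g := g2) hqg1n hs2n
  have P2 : Summable (fun p : ℕ × ℕ => ‖g1 p.1 * q ^ (-(p.2 : ℤ))‖) :=
    Summable.mul_norm (f := g1) (g := fun j : ℕ => q ^ (-(j : ℤ))) hs1n hgeo0N
  have P3 : Summable (fun p : ℕ × ℕ => ‖q ^ (-(p.1 : ℤ)) * g2 p.2‖) :=
    Summable.mul_norm (f := fun i : ℕ => q ^ (-(i : ℤ))) (g := g2) hgeo0N hs2n
  have hsumF : Summable (fun p : ℕ × ℕ =>
      ‖q ^ ((μ1.part p.1 : ℤ) + (μ2.part p.2 : ℤ) - (p.1 : ℤ) - (p.2 : ℤ) - 1) -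
        q ^ (-(p.1 : ℤ) - (p.2 : ℤ) - 1)‖) := by
    refine Summable.of_nonneg_of_le (fun p => norm_nonneg _) (fun p => ?_) ((P1.add P2).add P3)
    rw [hpt p]
    exact (norm_add_le _ _).trans (add_le_add_left (norm_add_le _ _) _)
  have hD : (∑' p : ℕ × ℕ,
      (q ^ ((μ1.part p.1 : ℤ) + (μ2.part p.2 : ℤ) - (p.1 : ℤ) - (p.2 : ℤ) - 1) -
        q ^ (-(p.1 : ℤ) - (p.2 : ℤ) - 1)))
      = q * T1 * T2 + T1 * (q / (q - 1)) + (q / (q - 1)) * T2 := by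
    rw [tsum_congr hpt, Summable.tsum_add ((P1.of_norm).add P2.of_norm) P3.of_norm,
      Summable.tsum_add P1.of_norm P2.of_norm,
      ← tsum_mul_tsum_of_summable_norm (f := fun i => q * g1 i) (g := g2) hqg1n hs2n,
      ← tsum_mul_tsum_of_summable_norm (f := g1) (g := fun j : ℕ => q ^ (-(j : ℤ))) hs1n hgeo0N,
      ← tsum_mul_tsum_of_summable_norm (f := fun i : ℕ => q ^ (-(i : ℤ))) (g := g2) hgeo0N hs2n,
      tsum_mul_left, hT1, hT2, htgeo0]
  -- content sums
  have hc1 : (∑ x ∈ μ1.cells, q ^ Partition'.content x) = q * T1 / (q - 1) := by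
    rw [eq_div_iff hq1', mul_comm _ (q - 1)]
    exact aux_content μ1 hq hN1
  have hc2 : (∑ x ∈ μ2.cells, q ^ Partition'.content x) = q * T2 / (q - 1) := by
    rw [eq_div_iff hq1', mul_comm _ (q - 1)]
    exact aux_content μ2 hq hN2
  refine ⟨hsumF, hsum1, hsum2, ?_⟩
  rw [hS1, hS2, hD, hc1, hc2]
  field_simp
  ring
end

section
/- Let μ^1, μ^2 be partitions, let q, a ∈ ℂ with |q| > 1, and define (as in eqs. (56)–(60) of the paper) f_μ(q) = Σ_{x∈μ} q^{c(x)}, f_{μ^1 (μ^2)^t}(q) = Σ_{i,j≥1} ( q^{μ^1_i + (μ^2)^t_j − i − j + 1} − q^{−i−j+1} ), and F_{μ^1 (μ^2)^t}(q, a) = f_{μ^1 (μ^2)^t}(q) − a f_{μ^1}(q) − a f_{(μ^2)^t}(q). Then for all u ∈ ℂ of sufficiently small modulus, the series Σ_{n≥1} u^n F_{μ^1 (μ^2)^t}(q^n, a^n) / n converges absolutely and exp( Σ_{n≥1} u^n F_{μ^1 (μ^2)^t}(q^n, a^n) / n ) = ∏_{i,j=1}^∞ (1 − u q^{−i−j+1})(1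 − u a q^{μ^1_i − i − j + 1})(1 − u a q^{(μ^2)^t_j − i − j + 1}) / ( (1 − u q^{μ^1_i + (μ^2)^t_j − i − j + 1})(1 − u a q^{−i−j+1})² ), the infinite product converging absolutely. -/
/-- The content polynomial `f_μ(Q) = Σ_{x∈μ} Q^{c(x)}` (equation (60)). -/
noncomputable def fContent (μ : Partition') (Q : ℂ) : ℂ :=
  ∑ x ∈ μ.cells, Q ^ Partition'.content x

/-- `f_{μ¹(μ²)ᵗ}(Q) = Σ_{i,j≥1} (Q^{μ¹_i + (μ²)ᵗ_j − i − j + 1} − Q^{−i−j+1})`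
(equation (57)), absolutely convergent for `|Q| > 1`. -/
noncomputable def fDouble (μ1 μ2 : Partition') (Q : ℂ) : ℂ :=
  ∑' p : ℕ × ℕ,
    (Q ^ ((μ1.part p.1 : ℤ) + (μ2.conj.part p.2 : ℤ) - (p.1 : ℤ) - (p.2 : ℤ) - 1) -
      Q ^ (-(p.1 : ℤ) - (p.2 : ℤ) - 1))

/-- `F_{μ¹(μ²)ᵗ}(Q, A) = f_{μ¹(μ²)ᵗ}(Q) − A f_{μ¹}(Q) − A f_{(μ²)ᵗ}(Q)` (equation (56)). -/
noncomputable def FF (μ1 μ2 : Partition') (Q A : ℂ) : ℂ :=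
  fDouble μ1 μ2 Q - A * fContent μ1 Q - A * fContent μ2.conj Q

/-- The factor of the Nekrasov-type infinite product in equation (61), indexed by a
pair `p` of nonnegative integers (corresponding to `(i, j) = (p.1 + 1, p.2 + 1)`). -/
noncomputable def nekFactor (μ1 μ2 : Partition') (q a u : ℂ) (p : ℕ × ℕ) : ℂ :=
  ((1 - u * q ^ (-(p.1 : ℤ) - (p.2 : ℤ) - 1)) *
      (1 - u * a * q ^ ((μ1.part p.1 : ℤ) - (p.1 : ℤ) - (p.2 : ℤ) - 1)) *
      (1 - u * a * q ^ ((μ2.conj.part p.2 : ℤ) - (p.1 : ℤ) - (p.2 : ℤ) - 1))) /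
    ((1 - u * q ^ ((μ1.part p.1 : ℤ) + (μ2.conj.part p.2 : ℤ) - (p.1 : ℤ) - (p.2 : ℤ) - 1)) *
      (1 - u * a * q ^ (-(p.1 : ℤ) - (p.2 : ℤ) - 1)) ^ 2)

namespace NekAux

open Complex

def e0 (p : ℕ × ℕ) : ℤ := -(p.1 : ℤ) - (p.2 : ℤ) - 1
def e1 (μ : Partition') (p : ℕ × ℕ) : ℤ := (μ.part p.1 : ℤ) - (p.1 : ℤ) - (p.2 : ℤ) - 1
def e2 (ν : Partition') (p : ℕ × ℕ) : ℤ := (ν.part p.2 : ℤ) - (p.1 : ℤ) - (p.2 : ℤ) - 1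
def eH (μ ν : Partition') (p : ℕ × ℕ) : ℤ :=
  (μ.part p.1 : ℤ) + (ν.part p.2 : ℤ) - (p.1 : ℤ) - (p.2 : ℤ) - 1

noncomputable def w1 (q u : ℂ) (p : ℕ × ℕ) : ℂ := u * q ^ e0 p
noncomputable def w2 (μ : Partition') (q a u : ℂ) (p : ℕ × ℕ) : ℂ := u * a * q ^ e1 μ p
noncomputable def w3 (ν : Partition') (q a u : ℂ) (p : ℕ × ℕ) : ℂ := u * a * q ^ e2 ν p
noncomputable def w4 (μ ν : Partition') (q u : ℂ) (p : ℕ × ℕ) : ℂ := u * q ^ eH μ ν p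
noncomputable def w5 (q a u : ℂ) (p : ℕ × ℕ) : ℂ := u * a * q ^ e0 p

lemma nek_eq (μ1 μ2 : Partition') (q a u : ℂ) (p : ℕ × ℕ) :
    nekFactor μ1 μ2 q a u p =
      ((1 - w1 q u p) * (1 - w2 μ1 q a u p) * (1 - w3 μ2.conj q a u p)) /
        ((1 - w4 μ1 μ2.conj q u p) * (1 - w5 q a u p) ^ 2) := rfl

lemma fDouble_eq (μ1 μ2 : Partition') (Q : ℂ) :
    fDouble μ1 μ2 Q = ∑' p : ℕ × ℕ, (Q ^ eH μ1 μ2.conj p - Q ^ e0 p) := rfl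

noncomputable def gfun (μ ν : Partition') (q a u : ℂ) (n : ℕ) (p : ℕ × ℕ) : ℂ :=
  (w4 μ ν q u p ^ (n + 1) - w1 q u p ^ (n + 1)
      - (w2 μ q a u p ^ (n + 1) - w5 q a u p ^ (n + 1))
      - (w3 ν q a u p ^ (n + 1) - w5 q a u p ^ (n + 1))) / ((n : ℂ) + 1)

noncomputable def Lfun (μ ν : Partition') (q a u : ℂ) (p : ℕ × ℕ) : ℂ :=
  -Complex.log (1 - w4 μ ν q u p) - -Complex.log (1 - w1 q u p)
    - (-Complex.log (1 - w2 μ q a u p) - -Complex.log (1 - w5 q a u p))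
    - (-Complex.log (1 - w3 ν q a u p) - -Complex.log (1 - w5 q a u p))

lemma norm_zpow_le_aux {Q : ℂ} (hQ : 1 < ‖Q‖) (M : ℕ) {E : ℤ} {i j : ℕ}
    (hE : E ≤ (M : ℤ) - i - j - 1) :
    ‖Q ^ E‖ ≤ ‖Q‖ ^ M * ((‖Q‖⁻¹) ^ i * (‖Q‖⁻¹) ^ j) := by
  have h0 : (0:ℝ) < ‖Q‖ := lt_trans one_pos hQ
  rw [norm_zpow]
  calc ‖Q‖ ^ E ≤ ‖Q‖ ^ ((M : ℤ) - i - j) := zpow_le_zpow_right₀ hQ.le (by omega)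
    _ = ‖Q‖ ^ M * ((‖Q‖⁻¹) ^ i * (‖Q‖⁻¹) ^ j) := by
        rw [show (M : ℤ) - i - j = (M : ℤ) + (-(i:ℤ)) + (-(j:ℤ)) by ring,
          zpow_add₀ h0.ne', zpow_add₀ h0.ne', zpow_neg, zpow_neg,
          zpow_natCast, zpow_natCast, zpow_natCast, inv_pow, inv_pow, mul_assoc]

lemma summable_geo_prod {x : ℝ} (h0 : 0 ≤ x) (h1 : x < 1) :
    Summable fun p : ℕ × ℕ => x ^ p.1 * x ^ p.2 :=
  (summable_geometric_of_lt_one h0 h1).mul_of_nonneg (summable_geometric_of_lt_one h0 h1)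
    (fun n => pow_nonneg h0 n) (fun n => pow_nonneg h0 n)

lemma summable_zpow_fam {Q : ℂ} (hQ : 1 < ‖Q‖) (M : ℕ) (E : ℕ × ℕ → ℤ)
    (hE : ∀ p : ℕ × ℕ, E p ≤ (M : ℤ) - p.1 - p.2 - 1) :
    Summable fun p : ℕ × ℕ => Q ^ E p := by
  have h0 : (0:ℝ) < ‖Q‖ := lt_trans one_pos hQ
  have hinv0 : (0:ℝ) ≤ ‖Q‖⁻¹ := inv_nonneg.2 h0.le
  have hinv1 : ‖Q‖⁻¹ < 1 := inv_lt_one_of_one_lt₀ hQ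
  refine Summable.of_norm_bounded ((summable_geo_prod hinv0 hinv1).mul_left (‖Q‖ ^ M)) ?_
  exact fun p => norm_zpow_le_aux hQ M (hE p)

lemma hasSum_pow_div_neg_log {v : ℂ} (hv : ‖v‖ < 1) :
    HasSum (fun n : ℕ => v ^ (n + 1) / ((n : ℂ) + 1)) (-Complex.log (1 - v)) := by
  have h := Complex.hasSum_taylorSeries_neg_log hv
  have h2 := (hasSum_nat_add_iff' (f := fun n : ℕ => v ^ n / (n : ℂ)) 1).2 h
  simp only [Finset.sum_range_one, Nat.cast_zero, div_zero, sub_zero, Nat.cast_add,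
    Nat.cast_one] at h2
  exact h2

lemma zpow_pow_comm {q : ℂ} (E : ℤ) (m : ℕ) : (q ^ E) ^ m = (q ^ m) ^ E := by
  rw [← zpow_natCast (q ^ E) m, ← zpow_mul, mul_comm, zpow_mul, zpow_natCast]

end NekAux
namespace NekAux

open Complex

lemma mem_cells {μ : Partition'} {x : ℕ × ℕ} : x ∈ μ.cells ↔ x.2 < μ.part x.1 := by
  rw [Partition'.cells, Set.Finite.mem_toFinset]; rfl

lemma row_tsum (μ : Partition') {Q : ℂ} (hQ : 1 < ‖Q‖) :
    ∑' p : ℕ × ℕ, (Q ^ e1 μ p - Q ^ e0 p) = fContent μ Q := by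
  have h0 : (0:ℝ) < ‖Q‖ := lt_trans one_pos hQ
  have hQ0 : Q ≠ 0 := by
    intro h; rw [h, norm_zero] at hQ; linarith
  have hQ1 : Q ≠ 1 := by
    intro h; rw [h, norm_one] at hQ; linarith
  have hinv : ‖Q⁻¹‖ < 1 := by
    rw [norm_inv]; exact inv_lt_one_of_one_lt₀ hQ
  have h1Q : (1:ℂ) - Q⁻¹ ≠ 0 := by
    intro h
    rw [sub_eq_zero] at h
    rw [← h, norm_one] at hinv; linarith
  have hQm1 : Q - 1 ≠ 0 := sub_ne_zero.2 hQ1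
  have hs : Summable fun p : ℕ × ℕ => Q ^ e1 μ p - Q ^ e0 p := by
    apply Summable.sub
    · refine summable_zpow_fam hQ (μ.part 0) _ fun p => ?_
      have := μ.antitone' (Nat.zero_le p.1)
      simp only [e1]; omega
    · refine summable_zpow_fam hQ (μ.part 0) _ fun p => ?_
      simp only [e0]; omega
  have hinner : ∀ i : ℕ, HasSum (fun j : ℕ => Q ^ e1 μ (i, j) - Q ^ e0 (i, j))
      (∑ j ∈ Finset.range (μ.part i), Q ^ ((j : ℤ) - (i : ℤ))) := by
    intro i
    have hgeom := (hasSum_geometric_of_norm_lt_one hinv).mul_right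
      (Q ^ ((μ.part i : ℤ) - (i : ℤ) - 1) - Q ^ (-(i : ℤ) - 1))
    have heq : (fun j : ℕ => Q⁻¹ ^ j * (Q ^ ((μ.part i : ℤ) - (i : ℤ) - 1) - Q ^ (-(i : ℤ) - 1)))
        = fun j : ℕ => Q ^ e1 μ (i, j) - Q ^ e0 (i, j) := by
      funext j
      simp only [e1, e0]
      rw [show ((μ.part i : ℤ) - (i : ℤ) - (j : ℤ) - 1)
            = ((μ.part i : ℤ) - (i : ℤ) - 1) + (-(j : ℤ)) by ring,
        show (-(i : ℤ) - (j : ℤ) - 1) = (-(i : ℤ) - 1) + (-(j : ℤ)) by ring,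
        zpow_add₀ hQ0, zpow_add₀ hQ0, zpow_neg, zpow_natCast, ← inv_pow]
      ring
    rw [heq] at hgeom
    have hval : (1 - Q⁻¹)⁻¹ * (Q ^ ((μ.part i : ℤ) - (i : ℤ) - 1) - Q ^ (-(i : ℤ) - 1))
        = ∑ j ∈ Finset.range (μ.part i), Q ^ ((j : ℤ) - (i : ℤ)) := by
      have hsum : ∑ j ∈ Finset.range (μ.part i), Q ^ ((j : ℤ) - (i : ℤ))
          = (∑ j ∈ Finset.range (μ.part i), Q ^ j) * (Q ^ i)⁻¹ := by
        rw [Finset.sum_mul]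
        refine Finset.sum_congr rfl fun j _ => ?_
        rw [show ((j : ℤ) - (i : ℤ)) = (j : ℤ) + (-(i : ℤ)) by ring, zpow_add₀ hQ0,
          zpow_neg, zpow_natCast, zpow_natCast]
      have e1' : Q ^ (-(i : ℤ) - 1) = (Q ^ (i + 1))⁻¹ := by
        rw [show (-(i : ℤ) - 1) = -((i + 1 : ℕ) : ℤ) by push_cast; ring, zpow_neg, zpow_natCast]
      have e2' : Q ^ ((μ.part i : ℤ) - (i : ℤ) - 1) = Q ^ (μ.part i) * (Q ^ (i + 1))⁻¹ := by
        rw [show ((μ.part i : ℤ) - (i : ℤ) - 1) = (μ.part i : ℤ) + -((i + 1 : ℕ) : ℤ) by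
            push_cast; ring,
          zpow_add₀ hQ0, zpow_neg, zpow_natCast, zpow_natCast]
      rw [hsum, geom_sum_eq hQ1, e1', e2']
      have hpow : Q ^ i ≠ 0 := pow_ne_zero _ hQ0
      have hpow1 : Q ^ (i + 1) ≠ 0 := pow_ne_zero _ hQ0
      field_simp
      ring
    rw [← hval]
    exact hgeom
  obtain ⟨N, hN⟩ := μ.eventually_zero
  have houter : HasSum (fun i : ℕ => ∑ j ∈ Finset.range (μ.part i), Q ^ ((j : ℤ) - (i : ℤ)))
      (∑ i ∈ Finset.range N, ∑ j ∈ Finset.range (μ.part i), Q ^ ((j : ℤ) - (i : ℤ))) := by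
    apply hasSum_sum_of_ne_finset_zero
    intro i hi
    rw [hN i (by simpa using hi)]
    simp
  rw [Summable.tsum_prod hs, tsum_congr (fun i => (hinner i).tsum_eq), houter.tsum_eq]
  rw [fContent]
  rw [Finset.sum_sigma']
  refine Finset.sum_nbij' (fun x => (x.1, x.2)) (fun x => ⟨x.1, x.2⟩) ?_ ?_ ?_ ?_ ?_
  · rintro ⟨i, j⟩ hx
    rw [Finset.mem_sigma] at hx
    rw [mem_cells]
    simpa using hx.2
  · rintro ⟨i, j⟩ hx
    rw [mem_cells] at hx
    rw [Finset.mem_sigma]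
    constructor
    · simp only [Finset.mem_range]
      by_contra h
      push_neg at h
      have := hN i (by omega)
      simp only at hx
      omega
    · simpa using hx
  · rintro ⟨i, j⟩ _; rfl
  · rintro ⟨i, j⟩ _; rfl
  · rintro ⟨i, j⟩ _
    simp [Partition'.content]

lemma col_tsum (μ : Partition') {Q : ℂ} (hQ : 1 < ‖Q‖) :
    ∑' p : ℕ × ℕ, (Q ^ e2 μ p - Q ^ e0 p) = fContent μ Q := by
  rw [← row_tsum μ hQ,
    ← (Equiv.prodComm ℕ ℕ).tsum_eq (fun p : ℕ × ℕ => Q ^ e1 μ p - Q ^ e0 p)]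
  refine tsum_congr fun p => ?_
  simp only [Equiv.prodComm_apply, Prod.fst_swap, Prod.snd_swap, e1, e2, e0]
  rw [show ((μ.part p.2 : ℤ) - (p.2 : ℤ) - (p.1 : ℤ) - 1)
      = ((μ.part p.2 : ℤ) - (p.1 : ℤ) - (p.2 : ℤ) - 1) by ring,
    show (-(p.2 : ℤ) - (p.1 : ℤ) - 1) = (-(p.1 : ℤ) - (p.2 : ℤ) - 1) by ring]

end NekAux
set_option maxHeartbeats 1000000 in
/-- Equation (61): for `|q| > 1` and all `u` of sufficiently small modulus, the series
`Σ_{n≥1} uⁿ F_{μ¹(μ²)ᵗ}(qⁿ, aⁿ)/n` converges absolutely and its exponential equals the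
stated absolutely convergent infinite product. -/
theorem nekrasov_product_expression (μ1 μ2 : Partition') (q a : ℂ) (hq : 1 < ‖q‖) :
    ∃ ε > 0, ∀ u : ℂ, ‖u‖ < ε →
      Summable (fun n : ℕ =>
        ‖u ^ (n + 1) * FF μ1 μ2 (q ^ (n + 1)) (a ^ (n + 1)) / ((n : ℂ) + 1)‖) ∧
      Summable (fun p : ℕ × ℕ => ‖nekFactor μ1 μ2 q a u p - 1‖) ∧
      Multipliable (fun p : ℕ × ℕ => nekFactor μ1 μ2 q a u p) ∧
      Complex.exp (∑' n : ℕ, u ^ (n + 1) * FF μ1 μ2 (q ^ (n + 1)) (a ^ (n + 1)) / ((n : ℂ) + 1)) =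
        ∏' p : ℕ × ℕ, nekFactor μ1 μ2 q a u p := by
  classical
  have hq0 : (0:ℝ) < ‖q‖ := lt_trans one_pos hq
  have hqne : q ≠ 0 := by intro h; rw [h, norm_zero] at hq; linarith
  set r : ℝ := ‖q‖⁻¹ with hrdef
  have hr0 : 0 ≤ r := inv_nonneg.2 hq0.le
  have hr1 : r < 1 := inv_lt_one_of_one_lt₀ hq
  set M : ℕ := μ1.part 0 + μ2.conj.part 0 with hM
  set P : ℝ := (1 + ‖a‖) * ‖q‖ ^ M with hP
  have hqM1 : (1:ℝ) ≤ ‖q‖ ^ M := one_le_pow₀ hq.le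
  have ha1 : (1:ℝ) ≤ 1 + ‖a‖ := by linarith [norm_nonneg a]
  have hP1 : 1 ≤ P := by nlinarith
  have hP0 : 0 < P := lt_of_lt_of_le one_pos hP1
  refine ⟨(12 * P)⁻¹, by positivity, fun u hu => ?_⟩
  set c : ℝ := ‖u‖ * P with hc
  have hc0 : 0 ≤ c := mul_nonneg (norm_nonneg u) hP0.le
  have hc12 : c ≤ 1 / 12 := by
    have h1 : ‖u‖ * P < (12 * P)⁻¹ * P := mul_lt_mul_of_pos_right hu hP0
    have h2 : (12 * P)⁻¹ * P = 1 / 12 := by field_simp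
    rw [h2] at h1; linarith
  -- part bounds
  have hpart1 : ∀ i : ℕ, μ1.part i ≤ M := fun i =>
    le_trans (μ1.antitone' (Nat.zero_le i)) (Nat.le_add_right _ _)
  have hpart2 : ∀ j : ℕ, μ2.conj.part j ≤ M := fun j =>
    le_trans (μ2.conj.antitone' (Nat.zero_le j)) (Nat.le_add_left _ _)
  -- exponent bounds
  have hE0 : ∀ p : ℕ × ℕ, NekAux.e0 p ≤ (M : ℤ) - p.1 - p.2 - 1 := fun p => by
    simp only [NekAux.e0]; omega
  have hE1 : ∀ p : ℕ × ℕ, NekAux.e1 μ1 p ≤ (M : ℤ) - p.1 - p.2 - 1 := fun p => by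
    have := hpart1 p.1; simp only [NekAux.e1]; omega
  have hE2 : ∀ p : ℕ × ℕ, NekAux.e2 μ2.conj p ≤ (M : ℤ) - p.1 - p.2 - 1 := fun p => by
    have := hpart2 p.2; simp only [NekAux.e2]; omega
  have hEH : ∀ p : ℕ × ℕ, NekAux.eH μ1 μ2.conj p ≤ (M : ℤ) - p.1 - p.2 - 1 := fun p => by
    have h1 := μ1.antitone' (Nat.zero_le p.1)
    have h2 := μ2.conj.antitone' (Nat.zero_le p.2)
    simp only [NekAux.eH, hM]; push_cast; omega
  have hX0 : ∀ p : ℕ × ℕ, (0:ℝ) ≤ r ^ p.1 * r ^ p.2 := fun p => by positivity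
  have hX1 : ∀ p : ℕ × ℕ, r ^ p.1 * r ^ p.2 ≤ 1 := fun p =>
    mul_le_one₀ (pow_le_one₀ hr0 hr1.le) (by positivity) (pow_le_one₀ hr0 hr1.le)
  have hb : ∀ (E : ℤ) (p : ℕ × ℕ), E ≤ (M : ℤ) - p.1 - p.2 - 1 →
      ‖q ^ E‖ ≤ ‖q‖ ^ M * (r ^ p.1 * r ^ p.2) := fun E p hE =>
    NekAux.norm_zpow_le_aux hq M hE
  have haux1 : ∀ (E : ℤ) (p : ℕ × ℕ), E ≤ (M : ℤ) - p.1 - p.2 - 1 →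
      ‖u * q ^ E‖ ≤ c * (r ^ p.1 * r ^ p.2) := by
    intro E p hE
    have hqe := hb E p hE
    have hX := hX0 p
    calc ‖u * q ^ E‖ = ‖u‖ * ‖q ^ E‖ := norm_mul _ _
      _ ≤ ‖u‖ * (‖q‖ ^ M * (r ^ p.1 * r ^ p.2)) :=
          mul_le_mul_of_nonneg_left hqe (norm_nonneg u)
      _ ≤ ‖u‖ * (1 + ‖a‖) * (‖q‖ ^ M * (r ^ p.1 * r ^ p.2)) :=
          mul_le_mul_of_nonneg_right (le_mul_of_one_le_right (norm_nonneg u) ha1)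
            (by positivity)
      _ = c * (r ^ p.1 * r ^ p.2) := by rw [hc, hP]; ring
  have haux2 : ∀ (E : ℤ) (p : ℕ × ℕ), E ≤ (M : ℤ) - p.1 - p.2 - 1 →
      ‖u * a * q ^ E‖ ≤ c * (r ^ p.1 * r ^ p.2) := by
    intro E p hE
    have hqe := hb E p hE
    have hX := hX0 p
    calc ‖u * a * q ^ E‖ = ‖u‖ * ‖a‖ * ‖q ^ E‖ := by rw [norm_mul, norm_mul]
      _ ≤ ‖u‖ * ‖a‖ * (‖q‖ ^ M * (r ^ p.1 * r ^ p.2)) :=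
          mul_le_mul_of_nonneg_left hqe (by positivity)
      _ ≤ ‖u‖ * (1 + ‖a‖) * (‖q‖ ^ M * (r ^ p.1 * r ^ p.2)) :=
          mul_le_mul_of_nonneg_right
            (mul_le_mul_of_nonneg_left (by linarith [norm_nonneg a]) (norm_nonneg u))
            (by positivity)
      _ = c * (r ^ p.1 * r ^ p.2) := by rw [hc, hP]; ring
  have h1 : ∀ p : ℕ × ℕ, ‖NekAux.w1 q u p‖ ≤ c * (r ^ p.1 * r ^ p.2) := fun p =>
    haux1 _ p (hE0 p)
  have h2 : ∀ p : ℕ × ℕ, ‖NekAux.w2 μ1 q a u p‖ ≤ c * (r ^ p.1 * r ^ p.2) := fun p =>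
    haux2 _ p (hE1 p)
  have h3 : ∀ p : ℕ × ℕ, ‖NekAux.w3 μ2.conj q a u p‖ ≤ c * (r ^ p.1 * r ^ p.2) := fun p =>
    haux2 _ p (hE2 p)
  have h4 : ∀ p : ℕ × ℕ, ‖NekAux.w4 μ1 μ2.conj q u p‖ ≤ c * (r ^ p.1 * r ^ p.2) := fun p =>
    haux1 _ p (hEH p)
  have h5 : ∀ p : ℕ × ℕ, ‖NekAux.w5 q a u p‖ ≤ c * (r ^ p.1 * r ^ p.2) := fun p =>
    haux2 _ p (hE0 p)
  -- smallness
  have hsmall : ∀ (v : ℕ × ℕ → ℂ), (∀ p, ‖v p‖ ≤ c * (r ^ p.1 * r ^ p.2)) →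
      ∀ p, ‖v p‖ ≤ 1 / 12 := by
    intro v hv p
    have := hv p
    have := hX1 p
    have := hX0 p
    nlinarith
  have Sr : Summable fun p : ℕ × ℕ => r ^ p.1 * r ^ p.2 := NekAux.summable_geo_prod hr0 hr1
  -- summability of powers
  have sumk : ∀ (v : ℕ × ℕ → ℂ) (n : ℕ), (∀ p, ‖v p‖ ≤ c * (r ^ p.1 * r ^ p.2)) →
      Summable fun p : ℕ × ℕ => v p ^ (n + 1) := by
    intro v n hv
    refine Summable.of_norm_bounded (Sr.mul_left c) fun p => ?_
    rw [norm_pow]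
    calc ‖v p‖ ^ (n + 1) ≤ ‖v p‖ :=
          pow_le_of_le_one (norm_nonneg _) (le_trans (hsmall v hv p) (by norm_num))
            (Nat.succ_ne_zero n)
      _ ≤ c * (r ^ p.1 * r ^ p.2) := hv p
  -- pointwise bound on powers
  have hvp : ∀ (v : ℕ × ℕ → ℂ), (∀ p, ‖v p‖ ≤ c * (r ^ p.1 * r ^ p.2)) →
      ∀ (n : ℕ) (p : ℕ × ℕ),
        ‖v p ^ (n + 1)‖ ≤ (1/12 : ℝ) ^ n * (c * (r ^ p.1 * r ^ p.2)) := by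
    intro v hv n p
    rw [norm_pow, pow_succ]
    have hsm := hsmall v hv p
    exact mul_le_mul (pow_le_pow_left₀ (norm_nonneg _) hsm n) (hv p) (norm_nonneg _)
      (by positivity)
  -- claim A : value of the tsum over p for each n
  have hA : ∀ n : ℕ, ∑' p : ℕ × ℕ, NekAux.gfun μ1 μ2.conj q a u n p
      = u ^ (n + 1) * FF μ1 μ2 (q ^ (n + 1)) (a ^ (n + 1)) / ((n : ℂ) + 1) := by
    intro n
    have hQn : (1:ℝ) < ‖q ^ (n + 1)‖ := by
      rw [norm_pow]; exact one_lt_pow₀ hq (Nat.succ_ne_zero n)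
    have hexp : ∀ E : ℤ, (q ^ E) ^ (n + 1) = (q ^ (n + 1) : ℂ) ^ E := fun E =>
      NekAux.zpow_pow_comm E (n + 1)
    have s1 := sumk _ n h1
    have s2 := sumk _ n h2
    have s3 := sumk _ n h3
    have s4 := sumk _ n h4
    have s5 := sumk _ n h5
    have hXval : ∑' p : ℕ × ℕ,
        (NekAux.w4 μ1 μ2.conj q u p ^ (n + 1) - NekAux.w1 q u p ^ (n + 1))
        = u ^ (n + 1) * fDouble μ1 μ2 (q ^ (n + 1)) := by
      rw [show (fun p : ℕ × ℕ =>
          NekAux.w4 μ1 μ2.conj q u p ^ (n + 1) - NekAux.w1 q u p ^ (n + 1))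
          = fun p : ℕ × ℕ => u ^ (n + 1) *
            ((q ^ (n + 1) : ℂ) ^ NekAux.eH μ1 μ2.conj p - (q ^ (n + 1) : ℂ) ^ NekAux.e0 p)
        from funext fun p => by
          simp only [NekAux.w4, NekAux.w1, mul_pow, hexp]; ring]
      rw [tsum_mul_left, NekAux.fDouble_eq]
    have hYval : ∑' p : ℕ × ℕ,
        (NekAux.w2 μ1 q a u p ^ (n + 1) - NekAux.w5 q a u p ^ (n + 1))
        = u ^ (n + 1) * a ^ (n + 1) * fContent μ1 (q ^ (n + 1)) := by
      rw [show (fun p : ℕ × ℕ =>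
          NekAux.w2 μ1 q a u p ^ (n + 1) - NekAux.w5 q a u p ^ (n + 1))
          = fun p : ℕ × ℕ => u ^ (n + 1) * a ^ (n + 1) *
            ((q ^ (n + 1) : ℂ) ^ NekAux.e1 μ1 p - (q ^ (n + 1) : ℂ) ^ NekAux.e0 p)
        from funext fun p => by
          simp only [NekAux.w2, NekAux.w5, mul_pow, hexp]; ring]
      rw [tsum_mul_left, NekAux.row_tsum μ1 hQn]
    have hZval : ∑' p : ℕ × ℕ,
        (NekAux.w3 μ2.conj q a u p ^ (n + 1) - NekAux.w5 q a u p ^ (n + 1))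
        = u ^ (n + 1) * a ^ (n + 1) * fContent μ2.conj (q ^ (n + 1)) := by
      rw [show (fun p : ℕ × ℕ =>
          NekAux.w3 μ2.conj q a u p ^ (n + 1) - NekAux.w5 q a u p ^ (n + 1))
          = fun p : ℕ × ℕ => u ^ (n + 1) * a ^ (n + 1) *
            ((q ^ (n + 1) : ℂ) ^ NekAux.e2 μ2.conj p - (q ^ (n + 1) : ℂ) ^ NekAux.e0 p)
        from funext fun p => by
          simp only [NekAux.w3, NekAux.w5, mul_pow, hexp]; ring]
      rw [tsum_mul_left, NekAux.col_tsum μ2.conj hQn]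
    have TA : ∑' p : ℕ × ℕ,
        (NekAux.w4 μ1 μ2.conj q u p ^ (n + 1) - NekAux.w1 q u p ^ (n + 1)
          - (NekAux.w2 μ1 q a u p ^ (n + 1) - NekAux.w5 q a u p ^ (n + 1))
          - (NekAux.w3 μ2.conj q a u p ^ (n + 1) - NekAux.w5 q a u p ^ (n + 1)))
        = u ^ (n + 1) * fDouble μ1 μ2 (q ^ (n + 1))
          - u ^ (n + 1) * a ^ (n + 1) * fContent μ1 (q ^ (n + 1))
          - u ^ (n + 1) * a ^ (n + 1) * fContent μ2.conj (q ^ (n + 1)) := by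
      rw [Summable.tsum_sub ((s4.sub s1).sub (s2.sub s5)) (s3.sub s5),
        Summable.tsum_sub (s4.sub s1) (s2.sub s5), hXval, hYval, hZval]
    simp only [NekAux.gfun]
    rw [tsum_div_const, TA, FF]
    ring
  -- claim C : HasSum over n for each p
  have hC : ∀ p : ℕ × ℕ, HasSum (fun n : ℕ => NekAux.gfun μ1 μ2.conj q a u n p)
      (NekAux.Lfun μ1 μ2.conj q a u p) := by
    intro p
    have hlt : ∀ (v : ℕ × ℕ → ℂ), (∀ p, ‖v p‖ ≤ c * (r ^ p.1 * r ^ p.2)) → ‖v p‖ < 1 :=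
      fun v hv => lt_of_le_of_lt (hsmall v hv p) (by norm_num)
    have l1 := NekAux.hasSum_pow_div_neg_log (hlt _ h1)
    have l2 := NekAux.hasSum_pow_div_neg_log (hlt _ h2)
    have l3 := NekAux.hasSum_pow_div_neg_log (hlt _ h3)
    have l4 := NekAux.hasSum_pow_div_neg_log (hlt _ h4)
    have l5 := NekAux.hasSum_pow_div_neg_log (hlt _ h5)
    have H := ((l4.sub l1).sub (l2.sub l5)).sub (l3.sub l5)
    exact H.congr_fun fun n => by simp only [NekAux.gfun]; ring
  -- Fubini summability
  have hgbound : ∀ (n : ℕ) (p : ℕ × ℕ), ‖NekAux.gfun μ1 μ2.conj q a u n p‖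
      ≤ (6 * c) * ((1/12 : ℝ) ^ n * (r ^ p.1 * r ^ p.2)) := by
    intro n p
    have hd : (1:ℝ) ≤ ‖(n : ℂ) + 1‖ := by
      rw [show ((n : ℂ) + 1) = ((n + 1 : ℕ) : ℂ) by push_cast; ring, Complex.norm_natCast]
      exact_mod_cast Nat.succ_le_succ (Nat.zero_le n)
    have b1 := hvp _ h1 n p
    have b2 := hvp _ h2 n p
    have b3 := hvp _ h3 n p
    have b4 := hvp _ h4 n p
    have b5 := hvp _ h5 n p
    simp only [NekAux.gfun]
    rw [norm_div]
    have e1 : ‖NekAux.w4 μ1 μ2.conj q u p ^ (n + 1) - NekAux.w1 q u p ^ (n + 1)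
          - (NekAux.w2 μ1 q a u p ^ (n + 1) - NekAux.w5 q a u p ^ (n + 1))
          - (NekAux.w3 μ2.conj q a u p ^ (n + 1) - NekAux.w5 q a u p ^ (n + 1))‖
        ≤ ‖NekAux.w4 μ1 μ2.conj q u p ^ (n + 1)‖ + ‖NekAux.w1 q u p ^ (n + 1)‖
          + (‖NekAux.w2 μ1 q a u p ^ (n + 1)‖ + ‖NekAux.w5 q a u p ^ (n + 1)‖)
          + (‖NekAux.w3 μ2.conj q a u p ^ (n + 1)‖ + ‖NekAux.w5 q a u p ^ (n + 1)‖) := by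
      refine le_trans (norm_sub_le _ _) ?_
      refine add_le_add (le_trans (norm_sub_le _ _) ?_) (norm_sub_le _ _)
      exact add_le_add (norm_sub_le _ _) (norm_sub_le _ _)
    calc ‖NekAux.w4 μ1 μ2.conj q u p ^ (n + 1) - NekAux.w1 q u p ^ (n + 1)
          - (NekAux.w2 μ1 q a u p ^ (n + 1) - NekAux.w5 q a u p ^ (n + 1))
          - (NekAux.w3 μ2.conj q a u p ^ (n + 1) - NekAux.w5 q a u p ^ (n + 1))‖
          / ‖(n : ℂ) + 1‖
        ≤ ‖NekAux.w4 μ1 μ2.conj q u p ^ (n + 1) - NekAux.w1 q u p ^ (n + 1)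
          - (NekAux.w2 μ1 q a u p ^ (n + 1) - NekAux.w5 q a u p ^ (n + 1))
          - (NekAux.w3 μ2.conj q a u p ^ (n + 1) - NekAux.w5 q a u p ^ (n + 1))‖ :=
          div_le_self (norm_nonneg _) hd
      _ ≤ (6 * c) * ((1/12 : ℝ) ^ n * (r ^ p.1 * r ^ p.2)) := by
          refine le_trans e1 ?_; linarith
  have hunc : Summable (Function.uncurry fun n (p : ℕ × ℕ) =>
      NekAux.gfun μ1 μ2.conj q a u n p) := by
    have hmaj : Summable fun z : ℕ × (ℕ × ℕ) =>
        (6 * c) * ((1/12 : ℝ) ^ z.1 * (r ^ z.2.1 * r ^ z.2.2)) := by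
      refine Summable.mul_left _ ?_
      exact (summable_geometric_of_lt_one (by norm_num) (by norm_num)).mul_of_nonneg Sr
        (fun n => by positivity) hX0
    exact Summable.of_norm_bounded hmaj fun z => hgbound z.1 z.2
  have hsum_g_n : ∀ n : ℕ, Summable fun p : ℕ × ℕ => NekAux.gfun μ1 μ2.conj q a u n p :=
    fun n => hunc.prod_factor n
  have hsum_g_p : ∀ p : ℕ × ℕ, Summable fun n : ℕ => NekAux.gfun μ1 μ2.conj q a u n p :=
    fun p => (hC p).summable
  -- smallness of Lfun
  have hlog : ∀ (v : ℕ × ℕ → ℂ), (∀ p, ‖v p‖ ≤ c * (r ^ p.1 * r ^ p.2)) →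
      ∀ p : ℕ × ℕ, ‖Complex.log (1 - v p)‖ ≤ (3/2 : ℝ) * (c * (r ^ p.1 * r ^ p.2)) := by
    intro v hv p
    have hsm : ‖-(v p)‖ ≤ 1/2 := by
      rw [norm_neg]; exact le_trans (hsmall v hv p) (by norm_num)
    have := Complex.norm_log_one_add_half_le_self (z := -(v p)) hsm
    rw [← sub_eq_add_neg] at this
    refine le_trans this ?_
    rw [norm_neg]
    nlinarith [hv p, hX0 p]
  have hLbound : ∀ p : ℕ × ℕ, ‖NekAux.Lfun μ1 μ2.conj q a u p‖
      ≤ 9 * (c * (r ^ p.1 * r ^ p.2)) := by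
    intro p
    have g1 := hlog _ h1 p
    have g2 := hlog _ h2 p
    have g3 := hlog _ h3 p
    have g4 := hlog _ h4 p
    have g5 := hlog _ h5 p
    have e1 : ‖NekAux.Lfun μ1 μ2.conj q a u p‖
        ≤ ‖Complex.log (1 - NekAux.w4 μ1 μ2.conj q u p)‖
          + ‖Complex.log (1 - NekAux.w1 q u p)‖
          + (‖Complex.log (1 - NekAux.w2 μ1 q a u p)‖
            + ‖Complex.log (1 - NekAux.w5 q a u p)‖)
          + (‖Complex.log (1 - NekAux.w3 μ2.conj q a u p)‖
            + ‖Complex.log (1 - NekAux.w5 q a u p)‖) := by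
      rw [NekAux.Lfun]
      refine le_trans (norm_sub_le _ _) ?_
      refine add_le_add (le_trans (norm_sub_le _ _) ?_) ?_
      · refine add_le_add (le_trans (norm_sub_le _ _) ?_) ?_
        · rw [norm_neg, norm_neg]
        · rw [norm_sub_rev]
          refine le_trans (norm_sub_le _ _) ?_
          rw [norm_neg, norm_neg, add_comm]
      · refine le_trans (norm_sub_le _ _) ?_
        rw [norm_neg, norm_neg]
    refine le_trans e1 ?_
    linarith
  have hLsum : Summable fun p : ℕ × ℕ => NekAux.Lfun μ1 μ2.conj q a u p := by
    refine Summable.of_norm_bounded ((Sr.mul_left c).mul_left 9) fun p => ?_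
    exact hLbound p
  have hL1 : ∀ p : ℕ × ℕ, ‖NekAux.Lfun μ1 μ2.conj q a u p‖ ≤ 1 := by
    intro p
    have := hLbound p
    have := hX1 p
    have := hX0 p
    nlinarith
  -- claim D : exp (Lfun p) = nekFactor p
  have hne : ∀ z : ℂ, ‖z‖ ≤ 1/12 → (1:ℂ) - z ≠ 0 := by
    intro z hz h
    rw [sub_eq_zero] at h
    rw [← h, norm_one] at hz
    norm_num at hz
  have hD : ∀ p : ℕ × ℕ, Complex.exp (NekAux.Lfun μ1 μ2.conj q a u p)
      = nekFactor μ1 μ2 q a u p := by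
    intro p
    have n1 := hne _ (hsmall _ h1 p)
    have n2 := hne _ (hsmall _ h2 p)
    have n3 := hne _ (hsmall _ h3 p)
    have n4 := hne _ (hsmall _ h4 p)
    have n5 := hne _ (hsmall _ h5 p)
    have hre : NekAux.Lfun μ1 μ2.conj q a u p
        = (Complex.log (1 - NekAux.w1 q u p) + Complex.log (1 - NekAux.w2 μ1 q a u p)
            + Complex.log (1 - NekAux.w3 μ2.conj q a u p))
          - (Complex.log (1 - NekAux.w4 μ1 μ2.conj q u p)
            + (Complex.log (1 - NekAux.w5 q a u p) + Complex.log (1 - NekAux.w5 q a u p))) := by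
      rw [NekAux.Lfun]; ring
    rw [hre, Complex.exp_sub, Complex.exp_add, Complex.exp_add, Complex.exp_add,
      Complex.exp_add, Complex.exp_log n1, Complex.exp_log n2, Complex.exp_log n3,
      Complex.exp_log n4, Complex.exp_log n5, NekAux.nek_eq]
    congr 1
    ring
  -- the product
  have HP : HasProd (fun p : ℕ × ℕ => nekFactor μ1 μ2 q a u p)
      (Complex.exp (∑' p : ℕ × ℕ, NekAux.Lfun μ1 μ2.conj q a u p)) := by
    have H := hLsum.hasSum.cexp
    have heq : (Complex.exp ∘ fun p : ℕ × ℕ => NekAux.Lfun μ1 μ2.conj q a u p)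
        = fun p : ℕ × ℕ => nekFactor μ1 μ2 q a u p := funext fun p => hD p
    rwa [heq] at H
  refine ⟨?_, ?_, ⟨_, HP⟩, ?_⟩
  · -- goal 1
    set T : ℝ := ∑' p : ℕ × ℕ, (r ^ p.1 * r ^ p.2) with hT
    refine Summable.of_nonneg_of_le (fun n => norm_nonneg _) (fun n => ?_)
      (Summable.mul_left (6 * c * T)
        (summable_geometric_of_lt_one (by norm_num) (by norm_num : (1/12:ℝ) < 1)))
    rw [← hA n]
    have hnorms : Summable fun p : ℕ × ℕ => ‖NekAux.gfun μ1 μ2.conj q a u n p‖ := by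
      refine Summable.of_nonneg_of_le (fun p => norm_nonneg _) (fun p => hgbound n p) ?_
      exact Summable.mul_left _ (Sr.mul_left _)
    calc ‖∑' p : ℕ × ℕ, NekAux.gfun μ1 μ2.conj q a u n p‖
        ≤ ∑' p : ℕ × ℕ, ‖NekAux.gfun μ1 μ2.conj q a u n p‖ := norm_tsum_le_tsum_norm hnorms
      _ ≤ ∑' p : ℕ × ℕ, (6 * c * (1/12 : ℝ) ^ n) * (r ^ p.1 * r ^ p.2) := by
          refine Summable.tsum_le_tsum (fun p => ?_) hnorms (Sr.mul_left _)
          calc ‖NekAux.gfun μ1 μ2.conj q a u n p‖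
              ≤ (6 * c) * ((1/12 : ℝ) ^ n * (r ^ p.1 * r ^ p.2)) := hgbound n p
            _ = (6 * c * (1/12 : ℝ) ^ n) * (r ^ p.1 * r ^ p.2) := by ring
      _ = (6 * c * (1/12 : ℝ) ^ n) * T := tsum_mul_left
      _ = 6 * c * T * (1/12 : ℝ) ^ n := by ring
  · -- goal 2
    refine Summable.of_nonneg_of_le (fun p => norm_nonneg _) (fun p => ?_)
      ((Sr.mul_left c).mul_left 18)
    rw [← hD p]
    have hab : ‖NekAux.Lfun μ1 μ2.conj q a u p‖ ≤ 1 := by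
      exact hL1 p
    have := Complex.norm_exp_sub_one_le hab
    refine le_trans this ?_
    have := hLbound p
    nlinarith [hX0 p]
  · -- goal 4
    calc Complex.exp (∑' n : ℕ,
          u ^ (n + 1) * FF μ1 μ2 (q ^ (n + 1)) (a ^ (n + 1)) / ((n : ℂ) + 1))
        = Complex.exp (∑' n : ℕ, ∑' p : ℕ × ℕ, NekAux.gfun μ1 μ2.conj q a u n p) := by
          rw [tsum_congr fun n => (hA n).symm]
      _ = Complex.exp (∑' p : ℕ × ℕ, ∑' n : ℕ, NekAux.gfun μ1 μ2.conj q a u n p) := by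
          rw [Summable.tsum_comm' hunc hsum_g_n hsum_g_p]
      _ = Complex.exp (∑' p : ℕ × ℕ, NekAux.Lfun μ1 μ2.conj q a u p) := by
          rw [tsum_congr fun p => (hC p).tsum_eq]
      _ = ∏' p : ℕ × ℕ, nekFactor μ1 μ2 q a u p := HP.tprod_eq.symm
end
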